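/- Let G be a DAG with distinct vertices x and y, let A be a valid adjustment set in G, and let A_O ⊆ opadj(G,x,y). Then x is d-separated from A_O \ A given A in G, i.e., for every z ∈ A_O \ A, every path between x and z in G is blocked by A. -/

import Mathlib

/-- Adjacency in the skeleton of a digraph given by edge relation `G`. -/
def skelAdj {V : Type*} (G : V → V → Prop) (a b : V) : Prop := G a b ∨ G b a

/-- A digraph is acyclic (a DAG) if it has no directed cycle. -/
def IsAcyclicDigraph {V : Type*} (G : V → V → Prop) : Prop :=
  ∀ v, ¬ Relation.TransGen G v v

/-- A path: a list of distinct vertices in which consecutive vertices are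
joined by an edge (of either orientation). -/
def IsPath {V : Type*} (G : V → V → Prop) (p : List V) : Prop :=
  p.Nodup ∧ p.Chain' (skelAdj G)

/-- A path between `x` and `y` (written from `x` to `y`). -/
def IsPathBetween {V : Type*} (G : V → V → Prop) (x y : V) (p : List V) : Prop :=
  IsPath G p ∧ p.head? = some x ∧ p.getLast? = some y

/-- A directed (causal) path from `x` to `y`: every edge points towards `y`. -/
def IsDirPath {V : Type*} (G : V → V → Prop) (x y : V) (p : List V) : Prop :=
  p.Nodup ∧ p.Chain' G ∧ p.head? = some x ∧ p.getLast? = some y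

/-- `w` is a collider on the path `p`: both edges of `p` at `w` point into `w`. -/
def IsCollider {V : Type*} (G : V → V → Prop) (p : List V) (w : V) : Prop :=
  ∃ a b, [a, w, b] <:+: p ∧ G a w ∧ G b w

/-- Descendants of a vertex (including the vertex itself). -/
def descendants {V : Type*} (G : V → V → Prop) (v : V) : Set V :=
  {w | Relation.ReflTransGen G v w}

/-- Ancestors of a vertex (including the vertex itself). -/
def ancestors {V : Type*} (G : V → V → Prop) (v : V) : Set V :=
  {w | Relation.ReflTransGen G w v}

/-- Parents of a vertex. -/
def parents {V : Type*} (G : V → V → Prop) (v : V) : Set V := {w | G w v}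

/-- Descendants of a set of vertices. -/
def descendantsSet {V : Type*} (G : V → V → Prop) (W : Set V) : Set V :=
  ⋃ v ∈ W, descendants G v

/-- Ancestors of a set of vertices. -/
def ancestorsSet {V : Type*} (G : V → V → Prop) (W : Set V) : Set V :=
  ⋃ v ∈ W, ancestors G v

/-- Parents of a set of vertices. -/
def parentsSet {V : Type*} (G : V → V → Prop) (W : Set V) : Set V :=
  ⋃ v ∈ W, parents G v

/-- A path `p` is blocked by a vertex set `A`: it contains a non-collider in `A`,
or a collider `c` with `descendants G c ∩ A = ∅`. -/
def Blocked {V : Type*} (G : V → V → Prop) (A : Set V) (p : List V) : Prop :=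
  (∃ w ∈ p, ¬ IsCollider G p w ∧ w ∈ A) ∨
    (∃ c, IsCollider G p c ∧ descendants G c ∩ A = ∅)

/-- `cn G x y`: vertices `z ≠ x` lying on some directed path from `x` to `y`. -/
def cn {V : Type*} (G : V → V → Prop) (x y : V) : Set V :=
  {z | z ≠ x ∧ ∃ p, IsDirPath G x y p ∧ z ∈ p}

/-- The forbidden set `forb G x y = de(cn(G,x,y)) ∪ {x}`. -/
def forb {V : Type*} (G : V → V → Prop) (x y : V) : Set V :=
  descendantsSet G (cn G x y) ∪ {x}

/-- `A ⊆ V \ {x,y}` is a valid adjustment set in `G`: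
(i) `A ∩ forb(G,x,y) = ∅`, and (ii) every non-causal path from `x` to `y` is
blocked by `A`. -/
def IsValidAdjustment {V : Type*} (G : V → V → Prop) (x y : V) (A : Set V) : Prop :=
  x ∉ A ∧ y ∉ A ∧ A ∩ forb G x y = ∅ ∧
    ∀ p, IsPathBetween G x y p → ¬ p.Chain' G → Blocked G A p

/-- `rch G x y`: vertices lying on some path between `x` and `y` in the skeleton. -/
def rch {V : Type*} (G : V → V → Prop) (x y : V) : Set V :=
  {z | ∃ p, IsPathBetween G x y p ∧ z ∈ p}

/-- Induced subgraph of `G` on a vertex set `S`. -/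
def induce {V : Type*} (G : V → V → Prop) (S : Set V) : V → V → Prop :=
  fun a b => G a b ∧ a ∈ S ∧ b ∈ S

/-- `clr G x y`: all colliders on any path from `x` to `y` in the induced
subgraph of `G` on `rch G x y`. -/
def clr {V : Type*} (G : V → V → Prop) (x y : V) : Set V :=
  {c | ∃ p, IsPathBetween (induce G (rch G x y)) x y p ∧
      IsCollider (induce G (rch G x y)) p c}

/-- The optimal adjustment set `opadj G x y = pa(cn(G,x,y)) \ forb(G,x,y)`. -/
def opadj {V : Type*} (G : V → V → Prop) (x y : V) : Set V :=
  parentsSet G (cn G x y) \ forb G x y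

/-- `G^{pd}_{xy}`: `G` with every edge from `x` to a child of `x` that is an
ancestor of `y` removed. -/
def pdGraph {V : Type*} (G : V → V → Prop) (x y : V) : V → V → Prop :=
  fun a b => G a b ∧ ¬ (a = x ∧ b ∈ ancestors G y)

/-- `τ` is a topological ordering of `G`. -/
def IsTopOrder {V : Type*} (G : V → V → Prop) (τ : V → ℕ) : Prop :=
  Function.Injective τ ∧ ∀ a b, G a b → τ a < τ b

/-- `G'` is obtained from `G` by altering the position of the single node `z`
in a topological ordering of `G` (keeping the skeleton and the orientation of
all edges not incident to `z`, and reorienting edges incident to `z` according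
to the new ordering), with `x` preceding `y` in both orderings. -/
def AlterOne {V : Type*} (G G' : V → V → Prop) (z x y : V) : Prop :=
  ∃ τ τ' : V → ℕ,
    IsTopOrder G τ ∧ IsTopOrder G' τ' ∧
    τ x < τ y ∧ τ' x < τ' y ∧
    (∀ a b, a ≠ z → b ≠ z → (τ a < τ b ↔ τ' a < τ' b)) ∧
    (∀ a b, a ≠ z → b ≠ z → (G a b ↔ G' a b)) ∧
    (∀ a b, a = z ∨ b = z → (G' a b ↔ (skelAdj G a b ∧ τ' a < τ' b)))


section Helpers
variable {V : Type*}

lemma no2cycle {G : V → V → Prop} (hG : IsAcyclicDigraph G) {a b : V}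
    (h1 : G a b) (h2 : G b a) : False :=
  hG a (Relation.TransGen.head h1 (Relation.TransGen.single h2))

lemma triple_infix_iff {p : List V} {a t b : V} :
    [a, t, b] <:+: p ↔ ∃ i, p[i]? = some a ∧ p[i+1]? = some t ∧ p[i+2]? = some b := by
  constructor
  · rintro ⟨s, u, rfl⟩
    refine ⟨s.length, ?_, ?_, ?_⟩ <;>
      rw [List.append_assoc, List.getElem?_append_right (by omega)] <;>
      simp
  · rintro ⟨i, h0, h1, h2⟩
    have hd0 : (p.drop i)[0]? = some a := by rw [List.getElem?_drop]; simpa using h0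
    have hd1 : (p.drop i)[1]? = some t := by rw [List.getElem?_drop]; simpa using h1
    have hd2 : (p.drop i)[2]? = some b := by rw [List.getElem?_drop]; simpa using h2
    rcases hdrop : p.drop i with _ | ⟨a', d⟩
    · rw [hdrop] at hd0; simp at hd0
    rcases d with _ | ⟨t', d'⟩
    · rw [hdrop] at hd1; simp at hd1
    rcases d' with _ | ⟨b', d''⟩
    · rw [hdrop] at hd2; simp at hd2
    rw [hdrop] at hd0 hd1 hd2
    simp at hd0 hd1 hd2
    subst hd0; subst hd1; subst hd2
    rw [List.infix_iff_prefix_suffix]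
    exact ⟨p.drop i, by rw [hdrop]; exact ⟨d'', rfl⟩, List.drop_suffix i p⟩

lemma collider_iff_get {G : V → V → Prop} {p : List V} {t : V} :
    IsCollider G p t ↔ ∃ i a b, p[i]? = some a ∧ p[i+1]? = some t ∧
      p[i+2]? = some b ∧ G a t ∧ G b t := by
  constructor
  · rintro ⟨a, b, hinf, h1, h2⟩
    obtain ⟨i, g0, g1, g2⟩ := triple_infix_iff.mp hinf
    exact ⟨i, a, b, g0, g1, g2, h1, h2⟩
  · rintro ⟨i, a, b, g0, g1, g2, h1, h2⟩
    exact ⟨a, b, triple_infix_iff.mpr ⟨i, g0, g1, g2⟩, h1, h2⟩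

lemma chain'_get? {R : V → V → Prop} {l : List V} (h : l.Chain' R) {i : ℕ} {a b : V}
    (ha : l[i]? = some a) (hb : l[i+1]? = some b) : R a b := by
  replace h : l.IsChain R := h
  rw [List.isChain_iff_getElem] at h
  rw [List.getElem?_eq_some_iff] at ha hb
  obtain ⟨hi, rfl⟩ := ha
  obtain ⟨hj, rfl⟩ := hb
  exact h i (by omega)

lemma first_split {S : Set V} {p : List V} (h : ∃ v ∈ p, v ∈ S) :
    ∃ p₁ w p₂, p = p₁ ++ w :: p₂ ∧ w ∈ S ∧ ∀ u ∈ p₁, u ∉ S := by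
  classical
  induction p with
  | nil => simp at h
  | cons a rest ih =>
    by_cases ha : a ∈ S
    · exact ⟨[], a, rest, rfl, ha, by simp⟩
    · obtain ⟨v, hv, hvS⟩ := h
      have hvr : v ∈ rest := by
        rcases List.mem_cons.mp hv with rfl | h'
        · exact absurd hvS ha
        · exact h'
      obtain ⟨p₁, w, p₂, heq, hw, hmin⟩ := ih ⟨v, hvr, hvS⟩
      refine ⟨a :: p₁, w, p₂, by simp [heq], hw, ?_⟩
      rintro u hu
      rcases List.mem_cons.mp hu with rfl | h'
      · exact ha
      · exact hmin u h'

lemma head?_some_struct {l : List V} {x : V} (h : l.head? = some x) : ∃ t, l = x :: t := by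
  cases l with
  | nil => simp at h
  | cons a t => simp at h; exact ⟨t, by rw [h]⟩

lemma get?_some_of_le {l : List V} {n j : ℕ} {v : V} (h : l[n]? = some v) (hj : j ≤ n) :
    ∃ u, l[j]? = some u := by
  rw [List.getElem?_eq_some_iff] at h
  obtain ⟨hn, -⟩ := h
  exact ⟨l.get ⟨j, by omega⟩, List.getElem?_eq_getElem (by omega)⟩

end Helpers

/-- `x` is d-separated from `A_O \ A` given `A`. -/
theorem statement6 {V : Type*} (G : V → V → Prop) (hG : IsAcyclicDigraph G)
    (x y : V) (hxy : x ≠ y) (A A_O : Set V)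
    (hA : IsValidAdjustment G x y A)
    (hAO : A_O ⊆ opadj G x y) :
    ∀ z ∈ A_O \ A, ∀ p, IsPathBetween G x z p → Blocked G A p := by
  classical
  -- basic set facts
  have hDF : descendantsSet G (cn G x y) ⊆ forb G x y := Set.subset_union_left
  have hcnD : ∀ {v}, v ∈ cn G x y → v ∈ descendantsSet G (cn G x y) := by
    intro v hv
    exact Set.mem_biUnion hv Relation.ReflTransGen.refl
  have hDstep : ∀ {v u}, v ∈ descendantsSet G (cn G x y) → G v u →
      u ∈ descendantsSet G (cn G x y) := by
    intro v u hv hvu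
    obtain ⟨s, ⟨c, rfl⟩, hs⟩ := hv
    simp only [Set.mem_iUnion] at hs
    obtain ⟨hc, hvc⟩ := hs
    exact Set.mem_biUnion hc (hvc.tail hvu)
  have hDde : ∀ {v u}, v ∈ descendantsSet G (cn G x y) → u ∈ descendants G v →
      u ∈ descendantsSet G (cn G x y) := by
    intro v u hv hu
    obtain ⟨s, ⟨c, rfl⟩, hs⟩ := hv
    simp only [Set.mem_iUnion] at hs
    obtain ⟨hc, hvc⟩ := hs
    exact Set.mem_biUnion hc (hvc.trans hu)
  obtain ⟨hxA, hyA, hAFe, hval⟩ := hA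
  have hAF : ∀ {v}, v ∈ A → v ∈ forb G x y → False := by
    intro v h1 h2
    exact Set.eq_empty_iff_forall_notMem.mp hAFe v ⟨h1, h2⟩
  -- a collider whose descendants avoid A, if it lies in D, contradicts openness
  have hDnonempty : ∀ {t}, t ∈ descendantsSet G (cn G x y) →
      (descendants G t ∩ A).Nonempty → False := by
    intro t htD hne
    obtain ⟨u, hu1, hu2⟩ := hne
    exact hAF hu2 (hDF (hDde htD hu1))
  intro z hz p hp
  obtain ⟨hzO, hzA⟩ := hz
  obtain ⟨hzpa, hzF⟩ := hAO hzO
  have hzx : z ≠ x := fun h => hzF (Or.inr (by rw [h]; rfl))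
  -- z is a parent of some c ∈ cn
  obtain ⟨s, ⟨c, rfl⟩, hs⟩ := hzpa
  simp only [Set.mem_iUnion] at hs
  obtain ⟨hc_cn, hzc⟩ := hs
  have hzc : G z c := hzc
  obtain ⟨hcx, q, hq, hcq⟩ := hc_cn
  obtain ⟨hqnd, hqch, hqhd, hqlast⟩ := hq
  obtain ⟨tq, rfl⟩ := head?_some_struct hqhd
  have hxtq : x ∉ tq := (List.nodup_cons.mp hqnd).1
  have hctq : c ∈ tq := by
    rcases List.mem_cons.mp hcq with h | h
    · exact absurd h hcx
    · exact h
  obtain ⟨sq, t₂, htq⟩ := List.append_of_mem hctq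
  -- q' := c :: t₂ : a causal path from c to y, all of whose vertices lie in cn
  have hq'suff : (c :: t₂) <:+ (x :: tq) := ⟨x :: sq, by simp [htq]⟩
  have hq'nd : (c :: t₂).Nodup := hqnd.sublist hq'suff.sublist
  have hq'ch : (c :: t₂).Chain' G := hqch.suffix hq'suff
  have hq'last : (c :: t₂).getLast? = some y := by
    have heq : x :: tq = (x :: sq) ++ (c :: t₂) := by simp [htq]
    rw [heq, List.getLast?_append] at hqlast
    rw [List.getLast?_eq_getLast (List.cons_ne_nil _ _)] at hqlast ⊢
    simpa using hqlast
  have hq'cn : ∀ v ∈ (c :: t₂), v ∈ cn G x y := by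
    intro v hv
    have hvtq : v ∈ tq := by
      rw [htq]
      exact List.mem_append_right _ hv
    exact ⟨fun h => hxtq (h ▸ hvtq), x :: tq, ⟨hqnd, hqch, hqhd, hqlast⟩,
      List.mem_cons_of_mem _ hvtq⟩
  have hzq' : z ∉ (c :: t₂) := fun h => hzF (hDF (hcnD (hq'cn z h)))
  have hxq' : x ∉ (c :: t₂) := fun h => (hq'cn x h).1 rfl
  -- r := z :: c :: t₂ : path from z ending at y
  have hrnd : (z :: c :: t₂).Nodup := List.nodup_cons.mpr ⟨hzq', hq'nd⟩
  have hrch : (z :: c :: t₂).Chain' G := List.isChain_cons.mpr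
    ⟨by intro u hu; simp at hu; rw [← hu]; exact hzc, hq'ch⟩
  have hrlast : (z :: c :: t₂).getLast? = some y := by
    rw [List.getLast?_eq_getLast (List.cons_ne_nil _ _)] at hq'last ⊢
    simpa using hq'last
  have hxr : x ∉ (z :: c :: t₂) := by
    intro h
    rcases List.mem_cons.mp h with h | h
    · exact hzx h.symm
    · exact hxq' h
  -- suppose p is not blocked
  by_contra hnb
  rw [Blocked] at hnb
  push_neg at hnb
  obtain ⟨h1, h2⟩ := hnb
  obtain ⟨⟨hpnd, hpch⟩, hphd, hplast⟩ := hp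
  have hzp : z ∈ p := by
    rw [List.getLast?_eq_getElem?] at hplast
    rw [List.mem_iff_getElem?]
    exact ⟨_, hplast⟩
  -- split p at the first vertex w lying on r
  obtain ⟨p₁, w, p₂, heq, hwr, hmin⟩ :=
    first_split (S := {v | v ∈ (z :: c :: t₂)}) ⟨z, hzp, List.mem_cons_self⟩
  subst heq
  have hwr : w ∈ (z :: c :: t₂) := hwr
  have hmin : ∀ u ∈ p₁, u ∉ (z :: c :: t₂) := hmin
  obtain ⟨r₁, r₂, hreq⟩ := List.append_of_mem hwr
  set m := p₁.length with hm
  have hgetw : (p₁ ++ w :: p₂)[m]? = some w := by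
    rw [List.getElem?_append_right (le_refl m)]
    simp [hm]
  have hget'w : (p₁ ++ w :: r₂)[m]? = some w := by
    rw [List.getElem?_append_right (le_refl m)]
    simp [hm]
  have hphd' : (p₁ ++ w :: p₂)[0]? = some x := by
    rw [← List.head?_eq_getElem?]
    exact hphd
  have hwx : w ≠ x := fun h => hxr (h ▸ hwr)
  have hm1 : 1 ≤ m := by
    rcases Nat.eq_zero_or_pos m with h | h
    · rw [h] at hgetw
      rw [hphd'] at hgetw
      exact absurd (Option.some.inj hgetw).symm hwx
    · exact h
  have hshare : ∀ n, n ≤ m → (p₁ ++ w :: p₂)[n]? = (p₁ ++ w :: r₂)[n]? := by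
    intro n hn
    rcases lt_or_eq_of_le hn with h | h
    · rw [List.getElem?_append_left h, List.getElem?_append_left h]
    · rw [h, hgetw, hget'w]
  have hwregion : ∀ n, m ≤ n → (p₁ ++ w :: r₂)[n]? = (w :: r₂)[n - m]? := by
    intro n hn
    exact List.getElem?_append_right hn
  -- properties of w :: r₂
  have hwr₂suff : (w :: r₂) <:+ (z :: c :: t₂) := ⟨r₁, hreq.symm⟩
  have hwr₂ch : (w :: r₂).Chain' G := hrch.suffix hwr₂suff
  have hwr₂nd : (w :: r₂).Nodup := hrnd.sublist hwr₂suff.sublist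
  have hwr₂last : (w :: r₂).getLast? = some y := by
    rw [hreq, List.getLast?_append] at hrlast
    rw [List.getLast?_eq_getLast (List.cons_ne_nil _ _)] at hrlast ⊢
    simpa using hrlast
  have hwr₂mem : ∀ u ∈ (w :: r₂), u ∈ (z :: c :: t₂) := by
    intro u hu
    rw [hreq]
    exact List.mem_append_right _ hu
  -- p chain decomposition
  have hpch' : List.IsChain (skelAdj G) (p₁ ++ w :: p₂) := hpch
  rw [List.isChain_append] at hpch'
  obtain ⟨hch1, hch2, hlink⟩ := hpch'
  have hpnd' := hpnd
  rw [List.nodup_append] at hpnd'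
  obtain ⟨hnd1, hnd2, hdisj⟩ := hpnd'
  -- p' := p₁ ++ w :: r₂ is a path from x to y
  have hp'nd : (p₁ ++ w :: r₂).Nodup := by
    rw [List.nodup_append]
    exact ⟨hnd1, hwr₂nd, fun u hu v hv huv => hmin u hu (huv ▸ hwr₂mem v hv)⟩
  have hp'ch : (p₁ ++ w :: r₂).Chain' (skelAdj G) := by
    show List.IsChain _ _
    rw [List.isChain_append]
    refine ⟨hch1, hwr₂ch.imp (fun a b h => Or.inl h), ?_⟩
    intro u hu v hv
    simp at hv
    rw [← hv]
    exact hlink u hu w rfl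
  have hp'hd : (p₁ ++ w :: r₂).head? = some x := by
    rw [List.head?_append] at hphd ⊢
    simpa using hphd
  have hp'last : (p₁ ++ w :: r₂).getLast? = some y := by
    rw [List.getLast?_append, hwr₂last]
    rfl
  by_cases hC : (p₁ ++ w :: r₂).Chain' G
  · -- Case B : p' is causal, so w ∈ cn and everything in p after w stays in forb
    have hwcn : w ∈ cn G x y :=
      ⟨hwx, p₁ ++ w :: r₂, ⟨hp'nd, hC, hp'hd, hp'last⟩,
        List.mem_append_right _ (List.mem_cons_self)⟩
    have key : ∀ k a v, (p₁ ++ w :: p₂)[m + k - 1]? = some a →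
        (p₁ ++ w :: p₂)[m + k]? = some v →
        G a v ∧ v ∈ descendantsSet G (cn G x y) := by
      intro k
      induction k with
      | zero =>
        intro a v ha hv
        simp only [Nat.add_zero] at ha hv
        have hvw : v = w := Option.some.inj (hv.symm.trans hgetw)
        rw [hvw]
        refine ⟨?_, hcnD hwcn⟩
        have ha' : (p₁ ++ w :: r₂)[m - 1]? = some a := by
          rw [← hshare (m-1) (by omega)]
          exact ha
        have := chain'_get? hC ha' (by rw [Nat.sub_add_cancel hm1]; exact hget'w)
        exact this
      | succ k ih =>
        intro a v ha hv
        have ha'' : (p₁ ++ w :: p₂)[m + k]? = some a := by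
          rw [show m + (k + 1) - 1 = m + k by omega] at ha
          exact ha
        obtain ⟨a', ha'⟩ := get?_some_of_le ha'' (by omega : m + k - 1 ≤ m + k)
        obtain ⟨hGa'a, haD⟩ := ih a' a ha' ha''
        have hv' : (p₁ ++ w :: p₂)[m + k + 1]? = some v := by
          rw [show m + (k + 1) = m + k + 1 by omega] at hv
          exact hv
        have hadj : skelAdj G a v := chain'_get? hpch ha'' hv'
        rcases hadj with h | h
        · exact ⟨h, hDstep haD h⟩
        · exfalso
          have hcol : IsCollider G (p₁ ++ w :: p₂) a := by
            rw [collider_iff_get]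
            refine ⟨m + k - 1, a', v, ha', ?_, ?_, hGa'a, h⟩
            · rw [show m + k - 1 + 1 = m + k by omega]
              exact ha''
            · rw [show m + k - 1 + 2 = m + k + 1 by omega]
              exact hv'
          exact hDnonempty haD (h2 a hcol)
    -- apply key at the end of p to conclude z ∈ forb, contradiction
    have hzlast : (p₁ ++ w :: p₂)[(p₁ ++ w :: p₂).length - 1]? = some z := by
      rw [← List.getLast?_eq_getElem?]
      exact hplast
    have hmlt : m < (p₁ ++ w :: p₂).length := by
      rw [List.getElem?_eq_some_iff] at hgetw
      exact hgetw.1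
    have hk : m + ((p₁ ++ w :: p₂).length - 1 - m) = (p₁ ++ w :: p₂).length - 1 := by omega
    obtain ⟨a, ha⟩ := get?_some_of_le hzlast
      (by omega : (p₁ ++ w :: p₂).length - 1 - 1 ≤ (p₁ ++ w :: p₂).length - 1)
    have := key ((p₁ ++ w :: p₂).length - 1 - m) a z
      (by rw [show m + ((p₁ ++ w :: p₂).length - 1 - m) - 1 =
        (p₁ ++ w :: p₂).length - 1 - 1 by omega]; exact ha)
      (by rw [hk]; exact hzlast)
    exact hzF (hDF this.2)
  · -- Case A : p' is a non-causal path from x to y, so it must be blocked; contradiction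
    have hbl := hval (p₁ ++ w :: r₂) ⟨⟨hp'nd, hp'ch⟩, hp'hd, hp'last⟩ hC
    rcases hbl with ⟨t, htp', htnc, htA⟩ | ⟨t, htcol, htde⟩
    · -- a non-collider of p' in A
      rcases List.mem_append.mp htp' with htp₁ | htwr₂
      · -- t ∈ p₁ : t is a collider on p (since p is open), transfer to p'
        have htp : t ∈ p₁ ++ w :: p₂ := List.mem_append_left _ htp₁
        have htcolp : IsCollider G (p₁ ++ w :: p₂) t := by
          by_contra hnc
          exact h1 t htp hnc htA
        obtain ⟨i, a, b, hia, hit, hib, hGa, hGb⟩ := collider_iff_get.mp htcolp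
        obtain ⟨j, hj⟩ := List.mem_iff_getElem?.mp htp₁
        have hjm : j < m := (List.getElem?_eq_some_iff.mp hj).1
        have hjp : (p₁ ++ w :: p₂)[j]? = some t := by
          rw [List.getElem?_append_left hjm]
          exact hj
        have hieq : i + 1 = j := by
          have hlt : i + 1 < (p₁ ++ w :: p₂).length := (List.getElem?_eq_some_iff.mp hit).1
          exact (List.getElem?_inj hlt hpnd).mp (hit.trans hjp.symm)
        apply htnc
        rw [collider_iff_get]
        refine ⟨i, a, b, ?_, ?_, ?_, hGa, hGb⟩
        · rw [← hshare i (by omega)]; exact hia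
        · rw [← hshare (i+1) (by omega)]; exact hit
        · rw [← hshare (i+2) (by omega)]; exact hib
      · -- t on the causal tail : t ∈ forb or t = z, neither may be in A
        have htr : t ∈ (z :: c :: t₂) := hwr₂mem t htwr₂
        rcases List.mem_cons.mp htr with rfl | htq'
        · exact hzA htA
        · exact hAF htA (hDF (hcnD (hq'cn t htq')))
    · -- a collider of p' whose descendants avoid A
      obtain ⟨i, a, b, hia, hit, hib, hGa, hGb⟩ := collider_iff_get.mp htcol
      by_cases hi : i + 1 < m
      · -- collider inside p₁ : transfer to p, contradict openness of p
        have hcolp : IsCollider G (p₁ ++ w :: p₂) t := by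
          rw [collider_iff_get]
          refine ⟨i, a, b, ?_, ?_, ?_, hGa, hGb⟩
          · rw [hshare i (by omega)]; exact hia
          · rw [hshare (i+1) (by omega)]; exact hit
          · rw [hshare (i+2) (by omega)]; exact hib
        exact Set.not_nonempty_empty (htde ▸ h2 t hcolp)
      · -- collider on the causal tail : impossible by acyclicity
        push_neg at hi
        have h1' : (p₁ ++ w :: r₂)[i+1]? = (w :: r₂)[i+1-m]? := hwregion _ hi
        have h2' : (p₁ ++ w :: r₂)[i+2]? = (w :: r₂)[i+2-m]? := hwregion _ (by omega)
        have htb : G t b := by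
          apply chain'_get? hwr₂ch (i := i+1-m)
          · rw [← h1']; exact hit
          · rw [show i+1-m+1 = i+2-m by omega, ← h2']; exact hib
        exact no2cycle hG htb hGb
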